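/- Let A be a holomorphic Fredholm pencil on U with z₀ an isolated point of the spectrum, Taylor coefficients Aⱼ at z₀, and inverse N(z) = Σ_{j≥−m} Nⱼ(z−z₀)^j. If B = ran A₀ ⊕ A₁(ker A₀), then m = 1, i.e. A(z)⁻¹ has a simple pole at z₀. -/

import Mathlib

open scoped Topology

open Filter

/-- A bounded operator is Fredholm if its kernel and cokernel are finite dimensional. -/
def IsFredholmOp {E : Type*} [NormedAddCommGroup E] [NormedSpace ℂ E]
    (A : E →L[ℂ] E) : Prop :=
  FiniteDimensional ℂ (LinearMap.ker A.toLinearMap) ∧ FiniteDimensional ℂ (E ⧸ LinearMap.range A.toLinearMap)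

set_option maxHeartbeats 1000000 in
/-- if `B = ran A₀ ⊕ A₁(ker A₀)` (with `A₀ = A(z₀)`, `A₁ = A'(z₀)`), then the
inverse of the holomorphic Fredholm pencil `A` has a simple pole at the isolated spectral
point `z₀`, i.e. the pole order `m` equals `1`. -/
theorem stmt_8 {E : Type*} [NormedAddCommGroup E] [NormedSpace ℂ E] [CompleteSpace E]
    (U : Set ℂ) (hUopen : IsOpen U) (hUconn : IsConnected U)
    (A : ℂ → E →L[ℂ] E) (hol : AnalyticOnNhd ℂ A U)
    (hFred : ∀ z ∈ U, IsFredholmOp (A z))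
    (z₀ : ℂ) (hz₀ : z₀ ∈ U)
    (hsing : ¬ IsUnit (A z₀)) (hiso : ∀ᶠ z in 𝓝[≠] z₀, IsUnit (A z))
    -- Laurent expansion of the inverse `N(z)` of pole order `m` at `z₀`
    (m : ℕ) (hm : 1 ≤ m)
    (N : ℤ → E →L[ℂ] E) (hNm : N (-(m : ℤ)) ≠ 0) (hlow : ∀ j : ℤ, j < -(m : ℤ) → N j = 0)
    (Ninv : ℂ → E →L[ℂ] E)
    (hNinv : ∀ᶠ z in 𝓝[≠] z₀, Ninv z ∘L A z = 1 ∧ A z ∘L Ninv z = 1)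
    (hLaurent : ∀ᶠ z in 𝓝[≠] z₀, HasSum (fun j : ℤ => (z - z₀) ^ j • N j) (Ninv z))
    -- the direct sum condition `B = ran A₀ ⊕ A₁ (ker A₀)`
    (hdirect : IsCompl (LinearMap.range (A z₀).toLinearMap)
      (Submodule.map (deriv A z₀).toLinearMap (LinearMap.ker (A z₀).toLinearMap))) :
    m = 1 := by
  by_contra hne
  have hm2 : 2 ≤ m := by omega
  -- the ℕ-indexed coefficients
  set c : ℕ → E →L[ℂ] E := fun n => N ((n : ℤ) - m) with hc
  set g : ℂ → E →L[ℂ] E := fun z => (z - z₀) ^ m • Ninv z with hg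
  -- good points
  have hgood : ∀ᶠ z in 𝓝[≠] z₀,
      (Ninv z ∘L A z = 1) ∧ z ≠ z₀ ∧ HasSum (fun n : ℕ => (z - z₀) ^ n • c n) (g z) := by
    filter_upwards [hNinv, hLaurent, self_mem_nhdsWithin] with z h1 h2 h3
    have hzne : z - z₀ ≠ 0 := sub_ne_zero.mpr h3
    refine ⟨h1.1, h3, ?_⟩
    have h4 := h2.const_smul ((z - z₀) ^ m)
    have h5 : HasSum (fun n : ℕ =>
        (z - z₀) ^ m • ((z - z₀) ^ (((n : ℤ) - m)) • N ((n : ℤ) - m))) (g z) := by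
      have hinj : Function.Injective (fun n : ℕ => (n : ℤ) - m) := by
        intro a b h
        simp only [sub_left_inj, Nat.cast_inj] at h
        exact h
      have hvanish : ∀ j ∉ Set.range (fun n : ℕ => (n : ℤ) - m),
          (fun j : ℤ => (z - z₀) ^ m • ((z - z₀) ^ j • N j)) j = 0 := by
        intro j hj
        have hjlt : j < -(m : ℤ) := by
          by_contra hge
          push_neg at hge
          exact hj ⟨(j + m).toNat, show (((j + m).toNat : ℤ) - m = j) by omega⟩
        simp [hlow j hjlt]
      exact (hinj.hasSum_iff hvanish).mpr h4
    refine h5.congr_fun fun n => ?_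
    rw [smul_smul, ← zpow_natCast (z - z₀) m, ← zpow_add₀ hzne]
    congr 1
    rw [← zpow_natCast (z - z₀) n]
    congr 1
    ring
  -- pick a specific good point to bound coefficients
  obtain ⟨z₁, hz₁⟩ := hgood.exists
  have hz₁ne : z₁ - z₀ ≠ 0 := sub_ne_zero.mpr hz₁.2.1
  -- the formal power series
  set p : FormalMultilinearSeries ℂ ℂ (E →L[ℂ] E) :=
    fun n => ContinuousMultilinearMap.mkPiRing ℂ (Fin n) (c n) with hp
  have hpn : ∀ n, ‖p n‖ = ‖c n‖ := fun n => ContinuousMultilinearMap.norm_mkPiRing _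
  have hrad : (‖z₁ - z₀‖₊ : ENNReal) ≤ p.radius := by
    apply p.le_radius_of_tendsto (l := 0)
    have := (hz₁.2.2.summable.tendsto_atTop_zero).norm
    rw [norm_zero] at this
    refine this.congr fun n => ?_
    rw [hpn, coe_nnnorm, norm_smul ((z₁ - z₀) ^ n) (c n), norm_pow, mul_comm]
  have hradpos : 0 < p.radius :=
    lt_of_lt_of_le (by simpa using (nnnorm_pos.mpr hz₁ne)) hrad
  have hFP : HasFPowerSeriesOnBall p.sum p 0 p.radius := p.hasFPowerSeriesOnBall hradpos
  have hcont : ContinuousAt p.sum 0 := hFP.hasFPowerSeriesAt.continuousAt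
  have hsum0 : p.sum 0 = c 0 := by
    have := hFP.hasFPowerSeriesAt.coeff_zero (fun _ => 0)
    rw [← this, hp]
    simp [ContinuousMultilinearMap.mkPiRing_apply]
  -- g z = p.sum (z - z₀) on good points
  have hgeq : ∀ᶠ z in 𝓝[≠] z₀, g z = p.sum (z - z₀) := by
    filter_upwards [hgood] with z hz
    have : HasSum (fun n : ℕ => p n (fun _ => z - z₀)) (g z) := by
      refine hz.2.2.congr_fun fun n => ?_
      rw [hp]
      simp [ContinuousMultilinearMap.mkPiRing_apply, Finset.prod_const]
    exact this.tsum_eq.symm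
  -- the key limit: g → c 0 = N(-m)
  have hkey : Tendsto g (𝓝[≠] z₀) (𝓝 (c 0)) := by
    have h1 : Tendsto (fun z : ℂ => z - z₀) (𝓝 z₀) (𝓝 (z₀ - z₀)) :=
      tendsto_id.sub tendsto_const_nhds
    rw [sub_self] at h1
    have h2 : Tendsto (fun z => p.sum (z - z₀)) (𝓝 z₀) (𝓝 (c 0)) := by
      rw [← hsum0]
      exact hcont.tendsto.comp h1
    exact (h2.mono_left nhdsWithin_le_nhds).congr' (hgeq.mono fun z h => h.symm)
  -- evaluation is continuous
  have heval : Continuous (fun q : (E →L[ℂ] E) × E => q.1 q.2) :=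
    isBoundedBilinearMap_apply.continuous
  have hzero : Tendsto (fun z : ℂ => (z - z₀) ^ (m - 1)) (𝓝 z₀) (𝓝 0) := by
    have h1 : Tendsto (fun z : ℂ => z - z₀) (𝓝 z₀) (𝓝 (z₀ - z₀)) :=
      tendsto_id.sub tendsto_const_nhds
    rw [sub_self] at h1
    have := h1.pow (m - 1)
    rwa [zero_pow (by omega : m - 1 ≠ 0)] at this
  -- Claim 1: N(-m) vanishes on range of A z₀
  have hE1 : ∀ u : E, c 0 (A z₀ u) = 0 := by
    intro u
    have hA : Tendsto (fun z => A z u) (𝓝[≠] z₀) (𝓝 (A z₀ u)) :=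
      ((heval.continuousAt.tendsto).comp
        (((hol z₀ hz₀).continuousAt.tendsto).prodMk_nhds tendsto_const_nhds)).mono_left
        nhdsWithin_le_nhds
    have hT : Tendsto (fun z => g z (A z u)) (𝓝[≠] z₀) (𝓝 (c 0 (A z₀ u))) :=
      (heval.continuousAt.tendsto).comp (hkey.prodMk_nhds hA)
    have hT0 : Tendsto (fun z => g z (A z u)) (𝓝[≠] z₀) (𝓝 0) := by
      have heq : ∀ᶠ z in 𝓝[≠] z₀, (z - z₀) ^ m • u = g z (A z u) := by
        filter_upwards [hgood] with z hz
        have : Ninv z (A z u) = u := by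
          have := congrArg (fun T : E →L[ℂ] E => T u) hz.1
          simpa using this
        rw [hg]
        simp [this]
      refine (Tendsto.congr' heq ?_)
      have h1 : Tendsto (fun z : ℂ => (z - z₀) ^ m) (𝓝[≠] z₀) (𝓝 0) := by
        have h2 : Tendsto (fun z : ℂ => z - z₀) (𝓝 z₀) (𝓝 (z₀ - z₀)) :=
          tendsto_id.sub tendsto_const_nhds
        rw [sub_self] at h2
        have := h2.pow m
        rw [zero_pow (by omega : m ≠ 0)] at this
        exact this.mono_left nhdsWithin_le_nhds
      simpa using h1.smul_const u
    exact tendsto_nhds_unique hT hT0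
  -- Claim 2: N(-m) vanishes on A₁ (ker A₀)
  have hE2 : ∀ v : E, A z₀ v = 0 → c 0 (deriv A z₀ v) = 0 := by
    intro v hv
    have hdA : HasDerivAt A (deriv A z₀) z₀ :=
      ((hol z₀ hz₀).differentiableAt).hasDerivAt
    have hd : HasDerivAt (fun z => A z v) (deriv A z₀ v) z₀ := by
      have := hdA.clm_apply (hasDerivAt_const z₀ v)
      simpa using this
    have hslope : Tendsto (slope (fun z => A z v) z₀) (𝓝[≠] z₀) (𝓝 (deriv A z₀ v)) :=
      hasDerivAt_iff_tendsto_slope.mp hd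
    have hT : Tendsto (fun z => g z (slope (fun w => A w v) z₀ z)) (𝓝[≠] z₀)
        (𝓝 (c 0 (deriv A z₀ v))) :=
      (heval.continuousAt.tendsto).comp (hkey.prodMk_nhds hslope)
    have hT0 : Tendsto (fun z => g z (slope (fun w => A w v) z₀ z)) (𝓝[≠] z₀) (𝓝 0) := by
      have heq : ∀ᶠ z in 𝓝[≠] z₀,
          (z - z₀) ^ (m - 1) • v = g z (slope (fun w => A w v) z₀ z) := by
        filter_upwards [hgood] with z hz
        have hzne : z - z₀ ≠ 0 := sub_ne_zero.mpr hz.2.1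
        have hNA : Ninv z (A z v) = v := by
          have := congrArg (fun T : E →L[ℂ] E => T v) hz.1
          simpa using this
        rw [slope_def_module, hv, sub_zero, hg]
        simp only [ContinuousLinearMap.smul_apply, map_smul, hNA, smul_smul]
        congr 1
        rw [mul_comm, ← pow_sub_one_mul (by omega : m ≠ 0) (z - z₀)]
        field_simp
      refine (Tendsto.congr' heq ?_)
      simpa using (hzero.mono_left nhdsWithin_le_nhds).smul_const v
    exact tendsto_nhds_unique hT hT0
  -- conclude N(-m) = 0
  apply hNm
  have hc0 : c 0 = N (-(m : ℤ)) := by rw [hc]; norm_num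
  rw [← hc0]
  ext x
  have hx : x ∈ (LinearMap.range (A z₀).toLinearMap) ⊔
      (Submodule.map (deriv A z₀).toLinearMap (LinearMap.ker (A z₀).toLinearMap)) := by
    rw [hdirect.sup_eq_top]; trivial
  obtain ⟨y, hy, w, hw, hyw⟩ := Submodule.mem_sup.mp hx
  obtain ⟨u, hu⟩ := hy
  have hu' : A z₀ u = y := hu
  obtain ⟨v, hv, hvw⟩ := hw
  have hv' : A z₀ v = 0 := hv
  have hvw' : deriv A z₀ v = w := hvw
  rw [← hyw]
  simp only [map_add, ContinuousLinearMap.zero_apply]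
  rw [← hu', ← hvw', hE1 u, hE2 v hv', add_zero]
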